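/- Let G be a connected simple undirected graph on n ≥ 1 vertices with incidence matrix ∇ over ZMod p (p prime), and let b be uniformly distributed on (ZMod p)^{|E|}. Then a = ∇·b is uniformly distributed over the set {v ∈ (ZMod p)^n : Σ_i v_i = 0}. -/

import Mathlib

/-- Entry of the oriented incidence matrix (over `ZMod p`) at vertex `i`, column `e`. -/
def incEntry (p : ℕ) {V : Type*} [DecidableEq V] [LinearOrder V] (e : Sym2 V) (i : V) :
    ZMod p :=
  if h : i ∈ e then (if i < Sym2.Mem.other' h then 1 else -1) else 0

lemma incEntry_eq (p : ℕ) {V : Type*} [DecidableEq V] [LinearOrder V] (x y : V) (hxy : x ≠ y)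
    (i : V) : incEntry p s(x, y) i =
      (if i = x then (if x < y then (1 : ZMod p) else -1) else 0) +
      (if i = y then (if y < x then (1 : ZMod p) else -1) else 0) := by
  unfold incEntry
  by_cases hix : i = x
  · subst hix
    have hiy : i ≠ y := hxy
    have hm : i ∈ s(i, y) := Sym2.mem_mk_left i y
    rw [dif_pos hm]
    have hother : Sym2.Mem.other' hm = y := by
      have h := Sym2.other_spec' hm
      rw [Sym2.eq_iff] at h
      rcases h with ⟨_, h⟩ | ⟨h, _⟩
      · exact h
      · exact absurd h hxy
    rw [hother]
    simp [hiy]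
  · by_cases hiy : i = y
    · subst hiy
      have hm : i ∈ s(x, i) := Sym2.mem_mk_right x i
      rw [dif_pos hm]
      have hother : Sym2.Mem.other' hm = x := by
        have h := Sym2.other_spec' hm
        rw [Sym2.eq_iff] at h
        rcases h with ⟨h, _⟩ | ⟨_, h⟩
        · exact absurd h hix
        · exact h
      rw [hother]
      simp [hix]
    · rw [dif_neg (by simp [Sym2.mem_iff, hix, hiy])]
      simp [hix, hiy]

lemma sum_incEntry (p : ℕ) {V : Type*} [Fintype V] [DecidableEq V] [LinearOrder V]
    (x y : V) (hxy : x ≠ y) : ∑ i, incEntry p s(x, y) i = 0 := by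
  simp_rw [incEntry_eq p x y hxy]
  rw [Finset.sum_add_distrib, Finset.sum_ite_eq' Finset.univ x, Finset.sum_ite_eq' Finset.univ y]
  rcases lt_or_gt_of_ne hxy with h | h
  · simp [h, asymm h]
  · simp [h, asymm h]

lemma sum_incEntry_of_not_isDiag (p : ℕ) {V : Type*} [Fintype V] [DecidableEq V] [LinearOrder V]
    (s : Sym2 V) (hd : ¬ s.IsDiag) : ∑ i, incEntry p s i = 0 := by
  induction s using Sym2.ind with
  | _ x y =>
    have hxy : x ≠ y := by simpa using hd
    exact sum_incEntry p x y hxy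

/-- If a map to a fintype has all fibers over `S` of the same positive size `k` and
empty fibers outside `S`, then the pushforward of the uniform distribution is uniform on `S`. -/
lemma map_uniform_of_fiber_card {α β : Type*} [Fintype α] [Nonempty α] [Fintype β]
    [DecidableEq β] (f : α → β) (S : Finset β) (hS : S.Nonempty) (k : ℕ) (hk : 0 < k)
    (hfib : ∀ v : β, (Finset.univ.filter fun a => f a = v).card = if v ∈ S then k else 0) :
    PMF.map f (PMF.uniformOfFintype α) = PMF.uniformOfFinset S hS := by
  have hmem : ∀ a : α, f a ∈ S := by
    intro a
    by_contra h
    have hc := hfib (f a)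
    rw [if_neg h, Finset.card_eq_zero, Finset.eq_empty_iff_forall_notMem] at hc
    exact hc a (by simp)
  have hcard : (Fintype.card α) = S.card * k := by
    rw [← Finset.card_univ,
      Finset.card_eq_sum_card_fiberwise (fun a _ => hmem a),
      Finset.sum_congr rfl (fun v hv => by rw [hfib v, if_pos hv])]
    simp [mul_comm]
  have hk0 : (k : ENNReal) ≠ 0 := by exact_mod_cast hk.ne'
  have hkt : (k : ENNReal) ≠ ⊤ := ENNReal.natCast_ne_top k
  ext v
  rw [PMF.map_apply, PMF.uniformOfFinset_apply, tsum_fintype]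
  simp only [PMF.uniformOfFintype_apply]
  rw [← Finset.sum_filter, Finset.sum_const, nsmul_eq_mul,
    Finset.filter_congr (fun a (_ : a ∈ Finset.univ) => (eq_comm : (v = f a) ↔ _)), hfib v]
  by_cases hv : v ∈ S
  · rw [if_pos hv, if_pos hv]
    have hScast : (Fintype.card α : ENNReal) = (S.card : ENNReal) * k := by
      rw [hcard]; push_cast; ring
    rw [hScast, ENNReal.mul_inv (Or.inr hkt) (Or.inl (ENNReal.natCast_ne_top _)),
      mul_comm ((S.card : ENNReal))⁻¹, ← mul_assoc, ENNReal.mul_inv_cancel hk0 hkt, one_mul]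
  · rw [if_neg hv, if_neg hv]
    simp

/-- If `G` is connected and `b` is uniform on `(ZMod p)^{|E|}`, then `a = ∇ ⬝ b` is uniform
on the set of vectors whose coordinates sum to `0`. -/
theorem incidence_mulVec_uniform {n p : ℕ} [Fact p.Prime] (hn : 1 ≤ n)
    (G : SimpleGraph (Fin n)) [DecidableRel G.Adj] (hG : G.Connected)
    (nabla : Matrix (Fin n) ↥G.edgeFinset (ZMod p))
    (hnabla : ∀ (i : Fin n) (e : ↥G.edgeFinset), nabla i e = incEntry p (e : Sym2 (Fin n)) i) :
    PMF.map (fun b => nabla.mulVec b) (PMF.uniformOfFintype (↥G.edgeFinset → ZMod p))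
      = PMF.uniformOfFinset (Finset.univ.filter fun v : Fin n → ZMod p => ∑ i, v i = 0)
          ⟨0, by simp⟩ := by
  classical
  set f : (↥G.edgeFinset → ZMod p) →ₗ[ZMod p] (Fin n → ZMod p) := Matrix.mulVecLin nabla with hf
  have hfapp : ∀ b, f b = nabla.mulVec b := fun b => rfl
  -- column sums vanish
  have hcol : ∀ e : ↥G.edgeFinset, ∑ i, nabla i e = 0 := by
    intro e
    simp_rw [hnabla]
    exact sum_incEntry_of_not_isDiag p _
      (G.not_isDiag_of_mem_edgeSet (SimpleGraph.mem_edgeFinset.mp e.2))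
  -- coordinates of f b sum to 0
  have hsum : ∀ b, ∑ i, f b i = 0 := by
    intro b
    simp only [hfapp, Matrix.mulVec, dotProduct]
    rw [Finset.sum_comm]
    refine Finset.sum_eq_zero fun e _ => ?_
    rw [← Finset.sum_mul, hcol e, zero_mul]
  -- differences of basis vectors at adjacent vertices lie in the range
  have hadj : ∀ i j : Fin n, G.Adj i j →
      (Pi.single i (1 : ZMod p) - Pi.single j 1) ∈ LinearMap.range f := by
    intro i j hij
    set e : ↥G.edgeFinset := ⟨s(i, j), SimpleGraph.mem_edgeFinset.mpr hij⟩ with he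
    have hcole : ∀ k, nabla k e =
        (if k = i then (if i < j then (1 : ZMod p) else -1) else 0) +
        (if k = j then (if j < i then (1 : ZMod p) else -1) else 0) := by
      intro k
      rw [hnabla k e]
      exact incEntry_eq p i j hij.ne k
    rcases lt_or_gt_of_ne hij.ne with h | h
    · refine ⟨Pi.single e 1, ?_⟩
      funext k
      simp only [hfapp, Matrix.mulVec_single, Pi.smul_apply, Matrix.col_apply, op_smul_eq_mul]
      rw [mul_one, hcole k]
      simp only [Pi.sub_apply, Pi.single_apply, h, if_true, not_lt_of_gt h]
      have : ¬ j < i := asymm h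
      simp only [this, if_false]
      split_ifs with h1 h2 <;> simp_all
    · refine ⟨Pi.single e (-1), ?_⟩
      funext k
      simp only [hfapp, Matrix.mulVec_single, Pi.smul_apply, Matrix.col_apply, op_smul_eq_mul]
      rw [hcole k]
      have h1 : ¬ i < j := asymm h
      simp only [Pi.sub_apply, Pi.single_apply, h, if_true, h1, if_false]
      split_ifs with h2 h3 <;> simp_all
  -- by connectivity, all such differences lie in the range
  have hP : ∀ i j : Fin n, (Pi.single i (1 : ZMod p) - Pi.single j 1) ∈ LinearMap.range f := by
    have hwalk : ∀ {i j : Fin n}, G.Walk i j →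
        (Pi.single i (1 : ZMod p) - Pi.single j 1) ∈ LinearMap.range f := by
      intro i j w
      induction w with
      | nil => simpa using (LinearMap.range f).zero_mem
      | cons h _ ih =>
        have := (LinearMap.range f).add_mem (hadj _ _ h) ih
        simpa [sub_add_sub_cancel] using this
    intro i j
    exact hwalk (hG.preconnected i j).some
  -- the range is exactly the zero-sum hyperplane
  have hrange : ∀ v : Fin n → ZMod p, v ∈ LinearMap.range f ↔ ∑ i, v i = 0 := by
    intro v
    constructor
    · rintro ⟨b, rfl⟩; exact hsum b
    · intro hv
      set i0 : Fin n := ⟨0, hn⟩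
      have hsingle : ∀ i, v i • (Pi.single i (1 : ZMod p) : Fin n → ZMod p)
          = (Pi.single i (v i) : Fin n → ZMod p) := fun i => by
        rw [← Pi.single_smul, smul_eq_mul, mul_one]
      have hv' : v = ∑ i : Fin n,
          v i • ((Pi.single i (1 : ZMod p) : Fin n → ZMod p) - Pi.single i0 1) := by
        simp_rw [smul_sub]
        rw [Finset.sum_sub_distrib, ← Finset.sum_smul, hv, zero_smul, sub_zero]
        simp_rw [hsingle]
        exact (Finset.univ_sum_single v).symm
      rw [hv']
      exact Submodule.sum_mem _ fun i _ => Submodule.smul_mem _ _ (hP i i0)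
  -- fiber cardinalities
  set S : Finset (Fin n → ZMod p) := Finset.univ.filter fun v => ∑ i, v i = 0 with hSdef
  have hmemS : ∀ v, v ∈ S ↔ ∑ i, v i = 0 := by
    intro v; simp [hSdef]
  set k : ℕ := (Finset.univ.filter fun b : ↥G.edgeFinset → ZMod p => f b = 0).card with hkdef
  have hk : 0 < k := by
    rw [hkdef]
    refine Finset.card_pos.mpr ⟨0, ?_⟩
    simp [map_zero]
  have hfib : ∀ v : Fin n → ZMod p,
      (Finset.univ.filter fun b => f b = v).card = if v ∈ S then k else 0 := by
    intro v
    by_cases hv : v ∈ S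
    · rw [if_pos hv]
      obtain ⟨b₀, hb₀⟩ := (hrange v).mpr ((hmemS v).mp hv)
      rw [hkdef]
      refine Finset.card_bij' (fun b _ => b - b₀) (fun b _ => b + b₀) ?_ ?_ ?_ ?_
      · intro b hb
        simp only [Finset.mem_filter, Finset.mem_univ, true_and] at hb ⊢
        rw [map_sub, hb, hb₀, sub_self]
      · intro b hb
        simp only [Finset.mem_filter, Finset.mem_univ, true_and] at hb ⊢
        rw [map_add, hb, hb₀, zero_add]
      · intro b _; simp
      · intro b _; simp
    · rw [if_neg hv, Finset.card_eq_zero, Finset.eq_empty_iff_forall_notMem]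
      intro b hb
      simp only [Finset.mem_filter, Finset.mem_univ, true_and] at hb
      exact hv ((hmemS v).mpr (hb ▸ hsum b))
  have := map_uniform_of_fiber_card (f := fun b => f b) S ⟨0, by simp [hSdef]⟩ k hk hfib
  simpa [hfapp] using this
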